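/- The cut lemma: for all assignments [X⃗:=x⃗], tuples Y⃗ with values y⃗ and tuples Z⃗ with values z⃗, the formula ([X⃗:=x⃗]Y⃗=y⃗ ∧ [X⃗:=x⃗, Y⃗:=y⃗]Z⃗=z⃗) → [X⃗:=x⃗]Z⃗=z⃗ is provable in the system L′_C, where [X⃗:=x⃗]W⃗=w⃗ abbreviates the conjunction of the formulas [X⃗:=x⃗]W_i=w_i over the components of W⃗. -/

import Mathlib

open Classical

/-- A finite signature: variables sorted into exogenous and endogenous, each with a
finite nonempty range of values. -/
structure Sig : Type 1 where
  Var : Type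
  exo : Var → Prop
  Val : Var → Type
  [decEqVar : DecidableEq Var]
  [finVar : Fintype Var]
  [neVar : Nonempty Var]
  [decEqVal : ∀ X : Var, DecidableEq (Val X)]
  [finVal : ∀ X : Var, Fintype (Val X)]
  [neVal : ∀ X : Var, Nonempty (Val X)]

attribute [instance] Sig.decEqVar Sig.finVar Sig.neVar Sig.decEqVal Sig.finVal Sig.neVal

variable {S : Sig}

/-- A valuation: a value for each variable. -/
abbrev Env (S : Sig) : Type := ∀ X : S.Var, S.Val X

instance : Nonempty (Env S) := ⟨fun X => Classical.arbitrary (S.Val X)⟩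

/-- Values for all variables other than `V`. -/
abbrev Others (S : Sig) (V : S.Var) : Type := ∀ X : {X : S.Var // X ≠ V}, S.Val X.val

/-- The restriction of a valuation to the variables other than `V`. -/
def Env.restrict (A : Env S) (V : S.Var) : Others S V := fun X => A X.val

/-- A family of structural functions (only the components at endogenous variables
are meaningful). -/
abbrev StructFuns (S : Sig) : Type := ∀ V : S.Var, Others S V → S.Val V

/-- A valuation complies with the structural functions: the value of each endogenous
variable is obtained by applying its structural function to the values of all
other variables. -/
def Complies (F : StructFuns S) (A : Env S) : Prop :=
  ∀ V : S.Var, ¬ S.exo V → A V = F V (A.restrict V)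

/-- The endogenous variable `V` is directly causally affected by `X` under `F`. -/
def DirAff (F : StructFuns S) (X V : S.Var) : Prop :=
  ¬ S.exo V ∧ ∃ (h : X ≠ V) (g : Others S V) (x₁ x₂ : S.Val X),
    x₁ ≠ x₂ ∧
      F V (Function.update g ⟨X, h⟩ x₁) ≠ F V (Function.update g ⟨X, h⟩ x₂)

/-- `F` is recursive: the transitive closure of the direct causal dependence
relation is asymmetric (transitivity is automatic for `Relation.TransGen`). -/
def RecursiveF (F : StructFuns S) : Prop :=
  ∀ a b : S.Var, Relation.TransGen (DirAff F) a b → ¬ Relation.TransGen (DirAff F) b a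

/-- An assignment of values to a set of pairwise distinct variables. -/
abbrev Intervention (S : Sig) : Type := ∀ X : S.Var, Option (S.Val X)

/-- The empty assignment. -/
def iEmpty (S : Sig) : Intervention S := fun _ => none

/-- Extend an assignment by additionally setting `Y` to `y` (overriding). -/
def iUpd (I : Intervention S) (Y : S.Var) (y : S.Val Y) : Intervention S :=
  Function.update I Y (some y)

/-- Combine assignments, the second overriding the first:  `[X⃗ := x⃗, Y⃗ := y⃗]`. -/
def icomp (I J : Intervention S) : Intervention S := fun W =>
  match J W with
  | some v => some v
  | none => I W

/-- The intervened family of structural functions: intervened variables get the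
constant function returning the assigned value; the rest are unchanged. -/
def intF (F : StructFuns S) (I : Intervention S) : StructFuns S :=
  fun V g => (I V).getD (F V g)

/-- `A'` is the result of intervening with `I` on the valuation `A` (w.r.t. `F`):
exogenous intervened variables get the assigned value, exogenous non-intervened
variables keep their value, and each endogenous variable complies with its new
structural function. -/
def IntervenedVal (F : StructFuns S) (A : Env S) (I : Intervention S) (A' : Env S) : Prop :=
  (∀ X : S.Var, S.exo X → ∀ v : S.Val X, I X = some v → A' X = v) ∧
  (∀ X : S.Var, S.exo X → I X = none → A' X = A X) ∧
  (∀ V : S.Var, ¬ S.exo V → A' V = intF F I V (A'.restrict V))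

/-- The intervened valuation (unique when `F` is recursive). -/
noncomputable def intVal (F : StructFuns S) (A : Env S) (I : Intervention S) : Env S :=
  Classical.epsilon (IntervenedVal F A I)

/-- The language L_C: atoms `Y = y`, negation, conjunction, interventionist
counterfactual operators. -/
inductive Form (S : Sig) : Type where
  | eq (Y : S.Var) (y : S.Val Y) : Form S
  | neg (φ : Form S) : Form S
  | conj (φ ψ : Form S) : Form S
  | int (I : Intervention S) (φ : Form S) : Form S

namespace Form

/-- Material implication, defined from `¬` and `∧` as usual. -/
def impl (φ ψ : Form S) : Form S := Form.neg (Form.conj φ (Form.neg ψ))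

/-- Disjunction, defined from `¬` and `∧` as usual. -/
def orF (φ ψ : Form S) : Form S := Form.neg (Form.conj (Form.neg φ) (Form.neg ψ))

/-- Biconditional. -/
def iffF (φ ψ : Form S) : Form S := Form.conj (impl φ ψ) (impl ψ φ)

end Form

/-- A canonical contradiction. -/
noncomputable def botF (S : Sig) : Form S :=
  let X : S.Var := Classical.arbitrary S.Var
  let x : S.Val X := Classical.arbitrary (S.Val X)
  Form.conj (Form.eq X x) (Form.neg (Form.eq X x))

/-- A canonical tautology. -/
noncomputable def topF (S : Sig) : Form S := Form.neg (botF S)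

/-- Disjunction of a list of formulas (the empty disjunction is a contradiction). -/
noncomputable def bigOr : List (Form S) → Form S
  | [] => botF S
  | φ :: l => l.foldl Form.orF φ

/-- Conjunction of a list of formulas (the empty conjunction is a tautology). -/
noncomputable def bigConj : List (Form S) → Form S
  | [] => topF S
  | φ :: l => l.foldl Form.conj φ

/-- `φ` is an instance of a propositional tautology: it evaluates to `true` under
every Boolean valuation that respects negation and conjunction (treating all
other formulas as atoms). -/
def Tauto (φ : Form S) : Prop :=
  ∀ v : Form S → Bool,
    (∀ ψ : Form S, v (Form.neg ψ) = !(v ψ)) →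
    (∀ ψ χ : Form S, v (Form.conj ψ χ) = (v ψ && v χ)) →
    v φ = true

/-- The assignment `[Z⃗ := z⃗, X := x]` where `Z⃗` lists all variables other than
`X` and `V`, used in the formula `X ⇝ V`. -/
def ltInt (X V : S.Var) (g : ∀ W : {W : S.Var // W ≠ X ∧ W ≠ V}, S.Val W.val)
    (x : S.Val X) : Intervention S := fun W =>
  if h : W = X then some (h.symm ▸ x)
  else if h' : W = V then none
  else some (g ⟨W, ⟨h, h'⟩⟩)

/-- The formula `X ⇝ V`: the disjunction, over tuples `z⃗` of values for all
variables other than `X` and `V`, distinct values `x₁ ≠ x₂` of `X` and distinct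
values `v₁ ≠ v₂` of `V`, of `[Z⃗:=z⃗, X:=x₁]V=v₁ ∧ [Z⃗:=z⃗, X:=x₂]V=v₂`. -/
noncomputable def leadsTo (X V : S.Var) : Form S :=
  bigOr ((Finset.univ.filter
      (fun p : (∀ W : {W : S.Var // W ≠ X ∧ W ≠ V}, S.Val W.val) ×
          (S.Val X × S.Val X) × (S.Val V × S.Val V) =>
        p.2.1.1 ≠ p.2.1.2 ∧ p.2.2.1 ≠ p.2.2.2)).toList.map
    (fun p =>
      Form.conj
        (Form.int (ltInt X V p.1 p.2.1.1) (Form.eq V p.2.2.1))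
        (Form.int (ltInt X V p.1 p.2.1.2) (Form.eq V p.2.2.2))))

/-- The chain `X₀ ⇝ X₁ ∧ ⋯ ∧ X_k ⇝ X_{k+1}`. -/
noncomputable def chainConj (X : ℕ → S.Var) : ℕ → Form S
  | 0 => leadsTo (X 0) (X 1)
  | n + 1 => Form.conj (chainConj X n) (leadsTo (X (n + 1)) (X (n + 2)))

/-- `ψ₁ → (ψ₂ → ⋯ → (ψₙ → φ))` for a list of premises. -/
def impsFrom : List (Form S) → Form S → Form S
  | [], φ => φ
  | ψ :: l, φ => Form.impl ψ (impsFrom l φ)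

/-- Satisfaction of an L_C formula in a causal model `⟨F, A⟩`. -/
def SatC : Form S → StructFuns S → Env S → Prop
  | Form.eq Y y, _, A => A Y = y
  | Form.neg φ, F, A => ¬ SatC φ F A
  | Form.conj φ ψ, F, A => SatC φ F A ∧ SatC ψ F A
  | Form.int I φ, F, A => SatC φ (intF F I) (intVal F A I)

/-- The proof system L′_C: propositional tautologies, modus ponens, and the
axiom schemes A1–A7. -/
inductive ThmC' : Form S → Prop where
  | taut : ∀ {φ : Form S}, Tauto φ → ThmC' φ
  | mp : ∀ {φ ψ : Form S}, ThmC' (Form.impl φ ψ) → ThmC' φ → ThmC' ψ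
  | a1 : ∀ (I : Intervention S) (Y : S.Var) (y y' : S.Val Y), y ≠ y' →
      ThmC' (Form.impl (Form.int I (Form.eq Y y)) (Form.neg (Form.int I (Form.eq Y y'))))
  | a2 : ∀ (I : Intervention S) (Y : S.Var),
      ThmC' (bigOr (((Finset.univ : Finset (S.Val Y)).toList).map
        (fun y => Form.int I (Form.eq Y y))))
  | a3 : ∀ (I : Intervention S) (Y Z : S.Var) (y : S.Val Y) (z : S.Val Z),
      ThmC' (Form.impl (Form.conj (Form.int I (Form.eq Y y)) (Form.int I (Form.eq Z z)))
        (Form.int (iUpd I Y y) (Form.eq Z z)))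
  | a4 : ∀ (I : Intervention S) (Y : S.Var) (y : S.Val Y),
      ThmC' (Form.int (iUpd I Y y) (Form.eq Y y))
  | a5 : ∀ (I : Intervention S) (Y Z : S.Var) (y : S.Val Y) (z : S.Val Z), Y ≠ Z →
      ThmC' (Form.impl
        (Form.conj (Form.int (iUpd I Y y) (Form.eq Z z)) (Form.int (iUpd I Z z) (Form.eq Y y)))
        (Form.int I (Form.eq Z z)))
  | a6 : ∀ (X : ℕ → S.Var) (k : ℕ),
      (∀ i : ℕ, i ≤ k → X i ≠ X (i + 1)) → X (k + 1) ≠ X 0 →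
      ThmC' (Form.impl (chainConj X k) (Form.neg (leadsTo (X (k + 1)) (X 0))))
  | a7 : ∀ (I : Intervention S) (U : S.Var) (u : S.Val U), S.exo U → I U = none →
      ThmC' (Form.iffF (Form.int (iEmpty S) (Form.eq U u)) (Form.int I (Form.eq U u)))

/-- Strong derivability from a set of premises in L′_C. -/
def ProvC' (Γ : Set (Form S)) (φ : Form S) : Prop :=
  ∃ l : List (Form S), (∀ ψ ∈ l, ψ ∈ Γ) ∧ ThmC' (impsFrom l φ)

/-- The language L′_C: Boolean combinations of formulas `[X⃗:=x⃗]Y=y`. -/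
inductive IsC' : Form S → Prop where
  | intEq : ∀ (I : Intervention S) (Y : S.Var) (y : S.Val Y),
      IsC' (Form.int I (Form.eq Y y))
  | neg : ∀ {φ : Form S}, IsC' φ → IsC' (Form.neg φ)
  | conj : ∀ {φ ψ : Form S}, IsC' φ → IsC' ψ → IsC' (Form.conj φ ψ)

/-- The assignment determined by a list of (variable, value) pairs. -/
def ofList : List ((W : S.Var) × S.Val W) → Intervention S
  | [] => iEmpty S
  | p :: l => Function.update (ofList l) p.1 (some p.2)

/-- `[I]W⃗=w⃗`: the conjunction of the formulas `[I]Wᵢ=wᵢ` over the components of `W⃗`. -/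
noncomputable def eqsConj (I : Intervention S) (L : List ((W : S.Var) × S.Val W)) : Form S :=
  bigConj (L.map (fun p => Form.int I (Form.eq p.1 p.2)))

/-! ### Auxiliary machinery for the cut lemma -/

section CutMachinery

variable {S : Sig}

lemma v_foldl_conj (v : Form S → Bool)
    (hc : ∀ ψ χ : Form S, v (Form.conj ψ χ) = (v ψ && v χ)) :
    ∀ (l : List (Form S)) (φ : Form S),
      v (l.foldl Form.conj φ) = (v φ && l.all (fun ψ => v ψ)) := by
  intro l
  induction l with
  | nil => intro φ; simp
  | cons ψ l ih =>
      intro φ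
      simp only [List.foldl_cons, ih, hc, List.all_cons, Bool.and_assoc]

lemma v_botF (v : Form S → Bool)
    (hn : ∀ ψ : Form S, v (Form.neg ψ) = !(v ψ))
    (hc : ∀ ψ χ : Form S, v (Form.conj ψ χ) = (v ψ && v χ)) :
    v (botF S) = false := by
  simp [botF, hn, hc]

lemma v_topF (v : Form S → Bool)
    (hn : ∀ ψ : Form S, v (Form.neg ψ) = !(v ψ))
    (hc : ∀ ψ χ : Form S, v (Form.conj ψ χ) = (v ψ && v χ)) :
    v (topF S) = true := by
  simp [topF, hn, v_botF v hn hc]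

lemma v_bigConj (v : Form S → Bool)
    (hn : ∀ ψ : Form S, v (Form.neg ψ) = !(v ψ))
    (hc : ∀ ψ χ : Form S, v (Form.conj ψ χ) = (v ψ && v χ)) :
    ∀ l : List (Form S), v (bigConj l) = l.all (fun ψ => v ψ)
  | [] => by simp [bigConj, v_topF v hn hc]
  | φ :: l => by
      simp only [bigConj, v_foldl_conj v hc, List.all_cons]

lemma v_orF (v : Form S → Bool)
    (hn : ∀ ψ : Form S, v (Form.neg ψ) = !(v ψ))
    (hc : ∀ ψ χ : Form S, v (Form.conj ψ χ) = (v ψ && v χ)) (φ ψ : Form S) :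
    v (Form.orF φ ψ) = (v φ || v ψ) := by
  simp [Form.orF, hn, hc]

lemma v_impl (v : Form S → Bool)
    (hn : ∀ ψ : Form S, v (Form.neg ψ) = !(v ψ))
    (hc : ∀ ψ χ : Form S, v (Form.conj ψ χ) = (v ψ && v χ)) (φ ψ : Form S) :
    v (Form.impl φ ψ) = (!(v φ) || v ψ) := by
  simp [Form.impl, hn, hc]

/-! ### Generic propositional tautologies -/

lemma tautK (a b c : Form S) :
    Tauto (Form.impl c (Form.impl (Form.conj a b) c)) := by
  intro v hn hc
  simp only [v_impl v hn hc, hc]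
  cases v a <;> cases v b <;> cases v c <;> rfl

lemma taut_and_right (a b : Form S) :
    Tauto (Form.impl (Form.conj a b) b) := by
  intro v hn hc
  simp only [v_impl v hn hc, hc]
  cases v a <;> cases v b <;> rfl

lemma tautCase2 (a b c' e c : Form S) :
    Tauto (Form.impl (Form.impl (Form.conj a c') e)
      (Form.impl (Form.impl b (Form.neg e))
        (Form.impl c' (Form.impl (Form.conj a b) c)))) := by
  intro v hn hc
  simp only [v_impl v hn hc, hc, hn]
  cases v a <;> cases v b <;> cases v c' <;> cases v e <;> cases v c <;> rfl

lemma tautOr3 (a b c : Form S) :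
    Tauto (Form.impl (Form.impl a c)
      (Form.impl (Form.impl b c) (Form.impl (Form.orF a b) c))) := by
  intro v hn hc
  simp only [v_impl v hn hc, v_orF v hn hc]
  cases v a <;> cases v b <;> cases v c <;> rfl

lemma tautPair (x a b : Form S) :
    Tauto (Form.impl (Form.impl x a)
      (Form.impl (Form.impl x b) (Form.impl x (Form.conj a b)))) := by
  intro v hn hc
  simp only [v_impl v hn hc, hc]
  cases v x <;> cases v a <;> cases v b <;> rfl

lemma tautTrans (x y z : Form S) :
    Tauto (Form.impl (Form.impl x y)
      (Form.impl (Form.impl y z) (Form.impl x z))) := by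
  intro v hn hc
  simp only [v_impl v hn hc]
  cases v x <;> cases v y <;> cases v z <;> rfl

lemma taut7 (P b E a jw jp t : Form S) :
    Tauto (Form.impl (Form.impl P b) (Form.impl (Form.impl P E)
      (Form.impl (Form.impl (Form.conj E a) jw)
        (Form.impl (Form.impl (Form.conj E b) jp)
          (Form.impl (Form.impl (Form.conj jp jw) t)
            (Form.impl (Form.conj P a) t)))))) := by
  intro v hn hc
  simp only [v_impl v hn hc, hc]
  cases v P <;> cases v b <;> cases v E <;> cases v a <;>
    cases v jw <;> cases v jp <;> cases v t <;> rfl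

lemma taut7' (P b E jp q jq f : Form S) :
    Tauto (Form.impl (Form.impl P b) (Form.impl (Form.impl P E)
      (Form.impl (Form.impl (Form.conj E b) jp)
        (Form.impl (Form.impl (Form.conj jp q) jq)
          (Form.impl (Form.impl (Form.conj E jq) f)
            (Form.impl (Form.conj P q) f)))))) := by
  intro v hn hc
  simp only [v_impl v hn hc, hc]
  cases v P <;> cases v b <;> cases v E <;> cases v jp <;>
    cases v q <;> cases v jq <;> cases v f <;> rfl

lemma taut4 (A B c d : Form S) :
    Tauto (Form.impl (Form.impl B c)
      (Form.impl (Form.impl (Form.conj A c) d)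
        (Form.impl (Form.conj A B) d))) := by
  intro v hn hc
  simp only [v_impl v hn hc, hc]
  cases v A <;> cases v B <;> cases v c <;> cases v d <;> rfl

/-! ### bigConj / bigOr rules -/

lemma taut_bigConj_elim {φ : Form S} {l : List (Form S)} (h : φ ∈ l) :
    Tauto (Form.impl (bigConj l) φ) := by
  intro v hn hc
  simp only [v_impl v hn hc, v_bigConj v hn hc]
  by_cases hall : l.all (fun ψ => v ψ) = true
  · have := List.all_eq_true.mp hall φ h
    simp [hall, this]
  · simp [Bool.eq_false_iff.mpr hall]

lemma taut_bigConj_rest {φ : Form S} {l : List (Form S)} :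
    Tauto (Form.impl (bigConj (φ :: l)) (bigConj l)) := by
  intro v hn hc
  simp only [v_impl v hn hc, v_bigConj v hn hc, List.all_cons]
  cases v φ <;> cases hl : l.all (fun ψ => v ψ) <;> rfl

lemma taut_conj_bigConj_cons {φ : Form S} {l : List (Form S)} :
    Tauto (Form.impl (Form.conj φ (bigConj l)) (bigConj (φ :: l))) := by
  intro v hn hc
  simp only [v_impl v hn hc, hc, v_bigConj v hn hc, List.all_cons]
  cases v φ <;> cases hl : l.all (fun ψ => v ψ) <;> rfl

lemma taut_bigOr_cons {φ : Form S} {l : List (Form S)} :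
    Tauto (Form.impl (bigOr (φ :: l)) (Form.orF φ (bigOr l))) := by
  intro v hn hc
  have vfold : ∀ (l : List (Form S)) (ψ : Form S),
      v (l.foldl Form.orF ψ) = (v ψ || l.any (fun χ => v χ)) := by
    intro l
    induction l with
    | nil => intro ψ; simp
    | cons χ l ih =>
        intro ψ
        simp only [List.foldl_cons, ih, v_orF v hn hc, List.any_cons, Bool.or_assoc]
  have h1 : v (bigOr (φ :: l)) = (v φ || l.any (fun χ => v χ)) := by
    simp only [bigOr, vfold]
  have h2 : v (bigOr l) = l.any (fun χ => v χ) := by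
    cases l with
    | nil => simp [bigOr, v_botF v hn hc]
    | cons χ l => simp only [bigOr, vfold, List.any_cons]
  simp only [v_impl v hn hc, v_orF v hn hc, h1, h2]
  cases v φ <;> cases hl : l.any (fun χ => v χ) <;> rfl

lemma thm_bigOr_elim {χ : Form S} :
    ∀ {l : List (Form S)}, (∀ φ ∈ l, ThmC' (Form.impl φ χ)) →
      ThmC' (Form.impl (bigOr l) χ)
  | [], _ => by
      apply ThmC'.taut
      intro v hn hc
      simp only [v_impl v hn hc, bigOr, v_botF v hn hc]
      rfl
  | φ :: l, h => by
      have hφ : ThmC' (Form.impl φ χ) := h φ List.mem_cons_self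
      have hl : ThmC' (Form.impl (bigOr l) χ) :=
        thm_bigOr_elim (fun ψ hψ => h ψ (List.mem_cons_of_mem _ hψ))
      have hor : ThmC' (Form.impl (Form.orF φ (bigOr l)) χ) :=
        ((ThmC'.taut (tautOr3 φ (bigOr l) χ)).mp hφ).mp hl
      exact ((ThmC'.taut (tautTrans (bigOr (φ :: l)) (Form.orF φ (bigOr l)) χ)).mp
        (ThmC'.taut taut_bigOr_cons)).mp hor

lemma thm_bigConj_intro {χ : Form S} :
    ∀ {l : List (Form S)}, (∀ φ ∈ l, ThmC' (Form.impl χ φ)) →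
      ThmC' (Form.impl χ (bigConj l))
  | [], _ => by
      apply ThmC'.taut
      intro v hn hc
      simp only [v_impl v hn hc, bigConj, v_topF v hn hc]
      cases v χ <;> rfl
  | φ :: l, h => by
      have hφ : ThmC' (Form.impl χ φ) := h φ List.mem_cons_self
      have hl : ThmC' (Form.impl χ (bigConj l)) :=
        thm_bigConj_intro (fun ψ hψ => h ψ (List.mem_cons_of_mem _ hψ))
      have hpair : ThmC' (Form.impl χ (Form.conj φ (bigConj l))) :=
        ((ThmC'.taut (tautPair χ φ (bigConj l))).mp hφ).mp hl
      exact ((ThmC'.taut (tautTrans χ (Form.conj φ (bigConj l)) (bigConj (φ :: l)))).mp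
        hpair).mp (ThmC'.taut taut_conj_bigConj_cons)

/-! ### Intervention composition lemmas -/

lemma icomp_empty (I : Intervention S) : icomp I (ofList []) = I := by
  funext W; rfl

lemma icomp_cons (I : Intervention S) (p : (W : S.Var) × S.Val W)
    (l : List ((W : S.Var) × S.Val W)) :
    icomp I (ofList (p :: l)) = iUpd (icomp I (ofList l)) p.1 p.2 := by
  funext W
  by_cases h : W = p.1
  · subst h
    simp [icomp, ofList, iUpd]
  · simp [icomp, ofList, iUpd, Function.update_of_ne h]

/-! ### Single-variable cut -/

lemma cut_one (I : Intervention S) (Y : S.Var) (y : S.Val Y) (Z : S.Var) (z : S.Val Z) :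
    ThmC' (Form.impl
      (Form.conj (Form.int I (Form.eq Y y)) (Form.int (iUpd I Y y) (Form.eq Z z)))
      (Form.int I (Form.eq Z z))) := by
  refine (thm_bigOr_elim ?_).mp (ThmC'.a2 I Z)
  intro φ hφ
  simp only [List.mem_map] at hφ
  obtain ⟨z', -, rfl⟩ := hφ
  by_cases hzz : z' = z
  · subst hzz
    exact ThmC'.taut (tautK _ _ _)
  · have h3 := ThmC'.a3 I Y Z y z'
    have h1 := ThmC'.a1 (iUpd I Y y) Z z z' (Ne.symm hzz)
    exact ((ThmC'.taut (tautCase2 (Form.int I (Form.eq Y y))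
      (Form.int (iUpd I Y y) (Form.eq Z z)) (Form.int I (Form.eq Z z'))
      (Form.int (iUpd I Y y) (Form.eq Z z')) (Form.int I (Form.eq Z z)))).mp h3).mp h1

/-! ### Pushing equalities through composed interventions -/

lemma push_lemma (I : Intervention S) :
    ∀ (Ys : List ((W : S.Var) × S.Val W)) (W : S.Var) (w : S.Val W),
      ThmC' (Form.impl (Form.conj (eqsConj I Ys) (Form.int I (Form.eq W w)))
        (Form.int (icomp I (ofList Ys)) (Form.eq W w)))
  | [], W, w => by
      rw [icomp_empty]
      exact ThmC'.taut (taut_and_right _ _)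
  | p :: l, W, w => by
      rw [icomp_cons]
      have ih1 := push_lemma I l W w
      have ih2 := push_lemma I l p.1 p.2
      have h3 := ThmC'.a3 (icomp I (ofList l)) p.1 W p.2 w
      have e1 : ThmC' (Form.impl (eqsConj I (p :: l)) (Form.int I (Form.eq p.1 p.2))) := by
        apply ThmC'.taut
        apply taut_bigConj_elim
        simp [eqsConj]
      have e2 : ThmC' (Form.impl (eqsConj I (p :: l)) (eqsConj I l)) :=
        ThmC'.taut taut_bigConj_rest
      exact (((((ThmC'.taut (taut7 (eqsConj I (p :: l)) (Form.int I (Form.eq p.1 p.2))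
        (eqsConj I l) (Form.int I (Form.eq W w))
        (Form.int (icomp I (ofList l)) (Form.eq W w))
        (Form.int (icomp I (ofList l)) (Form.eq p.1 p.2))
        (Form.int (iUpd (icomp I (ofList l)) p.1 p.2) (Form.eq W w)))).mp e1).mp e2).mp
          ih1).mp ih2).mp h3

/-! ### Many-variable cut for a single conclusion -/

lemma cut_many (I : Intervention S) :
    ∀ (Ys : List ((W : S.Var) × S.Val W)) (Z : S.Var) (z : S.Val Z),
      ThmC' (Form.impl
        (Form.conj (eqsConj I Ys) (Form.int (icomp I (ofList Ys)) (Form.eq Z z)))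
        (Form.int I (Form.eq Z z)))
  | [], Z, z => by
      rw [icomp_empty]
      exact ThmC'.taut (taut_and_right _ _)
  | p :: l, Z, z => by
      rw [icomp_cons]
      have ih := cut_many I l Z z
      have hpush := push_lemma I l p.1 p.2
      have hcut := cut_one (icomp I (ofList l)) p.1 p.2 Z z
      have e1 : ThmC' (Form.impl (eqsConj I (p :: l)) (Form.int I (Form.eq p.1 p.2))) := by
        apply ThmC'.taut
        apply taut_bigConj_elim
        simp [eqsConj]
      have e2 : ThmC' (Form.impl (eqsConj I (p :: l)) (eqsConj I l)) :=
        ThmC'.taut taut_bigConj_rest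
      exact (((((ThmC'.taut (taut7' (eqsConj I (p :: l)) (Form.int I (Form.eq p.1 p.2))
        (eqsConj I l) (Form.int (icomp I (ofList l)) (Form.eq p.1 p.2))
        (Form.int (iUpd (icomp I (ofList l)) p.1 p.2) (Form.eq Z z))
        (Form.int (icomp I (ofList l)) (Form.eq Z z))
        (Form.int I (Form.eq Z z)))).mp e1).mp e2).mp hpush).mp hcut).mp ih

end CutMachinery

/-- Theorem (cut lemma): `([X⃗:=x⃗]Y⃗=y⃗ ∧ [X⃗:=x⃗, Y⃗:=y⃗]Z⃗=z⃗) → [X⃗:=x⃗]Z⃗=z⃗` is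
provable in L′_C. -/
theorem cut_lemma (S : Sig) (I : Intervention S)
    (Ys Zs : List ((W : S.Var) × S.Val W))
    (hY : (Ys.map Sigma.fst).Nodup) (hZ : (Zs.map Sigma.fst).Nodup) :
    ThmC' (Form.impl
      (Form.conj (eqsConj I Ys) (eqsConj (icomp I (ofList Ys)) Zs))
      (eqsConj I Zs)) := by
  show ThmC' (Form.impl _ (bigConj (Zs.map (fun p => Form.int I (Form.eq p.1 p.2)))))
  apply thm_bigConj_intro
  intro φ hφ
  simp only [List.mem_map] at hφ
  obtain ⟨q, hq, rfl⟩ := hφ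
  have e : ThmC' (Form.impl (eqsConj (icomp I (ofList Ys)) Zs)
      (Form.int (icomp I (ofList Ys)) (Form.eq q.1 q.2))) := by
    apply ThmC'.taut
    apply taut_bigConj_elim
    exact List.mem_map_of_mem hq
  have cm := cut_many I Ys q.1 q.2
  exact ((ThmC'.taut (taut4 (eqsConj I Ys) (eqsConj (icomp I (ofList Ys)) Zs)
    (Form.int (icomp I (ofList Ys)) (Form.eq q.1 q.2))
    (Form.int I (Form.eq q.1 q.2)))).mp e).mp cm
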